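/- Let $a \neq 0$ be fixed and $n \geq 1$. With negative log-likelihood loss $\ell(b, \sigma) = \log\sigma + \frac{b^2}{2\sigma^2} + \frac{1}{2}\log(2\pi)$ for the centered Gaussian model, define $\sigma_{n+1,0}(b) = |b|$ (MLE from $n+1$ copies of $b$), $\sigma_{n,1}(b) = \sqrt{\frac{a^2 + n b^2}{n+1}}$ (MLE from one $a$ and $n$ copies of $b$), and $\sigma_{n-1,1}(b) = \sqrt{\frac{a^2 + (n-1)b^2}{n}}$. Then $\lim_{b \to 0^+}\big[-\ell(b,\sigma_{n+1,0}(b)) + (n+1)\ell(b,\sigma_{n,1}(b)) - n\ell(b,\sigma_{n-1,1}(b))\big] = +\infty$; in particular for every $n$ there exists $b > 0$ making this expression strictly positive. -/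
import Mathlib

open Filter Real

lemma stmt14_ct_aux (a k d : ℝ) (ha : 0 < a ^ 2) (hd : 0 < d) :
    ContinuousAt (fun b : ℝ =>
      Real.log ((a ^ 2 + k * b ^ 2) / d) / 2 + b ^ 2 / (2 * ((a ^ 2 + k * b ^ 2) / d))) 0 := by
  have hf : ContinuousAt (fun b : ℝ => (a ^ 2 + k * b ^ 2) / d) 0 := by fun_prop
  have h0 : (a ^ 2 + k * (0:ℝ) ^ 2) / d ≠ 0 := by
    simp only [ne_eq, pow_two, mul_zero, zero_mul, add_zero, div_eq_zero_iff]
    push_neg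
    constructor
    · nlinarith
    · exact hd.ne'
  have hlog : ContinuousAt (fun b : ℝ => Real.log ((a ^ 2 + k * b ^ 2) / d)) 0 :=
    hf.log h0
  have hden : ContinuousAt (fun b : ℝ => 2 * ((a ^ 2 + k * b ^ 2) / d)) 0 := by fun_prop
  have hden0 : 2 * ((a ^ 2 + k * (0:ℝ) ^ 2) / d) ≠ 0 := by
    simpa using h0
  exact (hlog.div_const 2).add (((continuousAt_id.pow 2).div hden hden0))

/-- key computation of Theorem 6: With the centered-Gaussian negative
log-likelihood loss `ℓ b σ = log σ + b²/(2σ²) + (1/2)log(2π)` and the ML estimates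
`σ_{n+1,0}(b) = |b|`, `σ_{n,1}(b) = √((a² + n b²)/(n+1))`,
`σ_{n-1,1}(b) = √((a² + (n-1) b²)/n)` (for fixed `a ≠ 0`), the expression
`-ℓ(b,σ_{n+1,0}(b)) + (n+1) ℓ(b,σ_{n,1}(b)) - n ℓ(b,σ_{n-1,1}(b))` tends to `+∞` as
`b → 0⁺`; in particular there exists `b > 0` making it strictly positive. -/
theorem stmt_14 (a : ℝ) (ha : a ≠ 0) (n : ℕ) (hn : 1 ≤ n)
    (ℓ : ℝ → ℝ → ℝ)
    (hℓ : ∀ b σ : ℝ, ℓ b σ = Real.log σ + b ^ 2 / (2 * σ ^ 2) + Real.log (2 * Real.pi) / 2)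
    (F : ℝ → ℝ)
    (hF : ∀ b : ℝ, F b = -ℓ b |b|
        + (n + 1 : ℝ) * ℓ b (Real.sqrt ((a ^ 2 + n * b ^ 2) / (n + 1)))
        - (n : ℝ) * ℓ b (Real.sqrt ((a ^ 2 + ((n : ℝ) - 1) * b ^ 2) / n))) :
    Filter.Tendsto F (nhdsWithin 0 (Set.Ioi 0)) Filter.atTop ∧
    ∃ b : ℝ, 0 < b ∧ 0 < F b := by
  have hnR : (0:ℝ) < n := by exact_mod_cast hn
  have hn1 : (0:ℝ) ≤ (n:ℝ) - 1 := by
    have : (1:ℝ) ≤ n := by exact_mod_cast hn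
    linarith
  have ha2 : 0 < a ^ 2 := by positivity
  set c : ℝ := Real.log (2 * Real.pi) / 2 with hc
  set G : ℝ → ℝ := fun b =>
    ((n:ℝ) + 1) * (Real.log ((a ^ 2 + n * b ^ 2) / ((n:ℝ)+1)) / 2
        + b ^ 2 / (2 * ((a ^ 2 + n * b ^ 2) / ((n:ℝ)+1))) + c)
    - (n:ℝ) * (Real.log ((a ^ 2 + ((n:ℝ) - 1) * b ^ 2) / n) / 2
        + b ^ 2 / (2 * ((a ^ 2 + ((n:ℝ) - 1) * b ^ 2) / n)) + c)
    - 1/2 - c with hG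
  have heq : ∀ b ∈ Set.Ioi (0:ℝ), F b = -Real.log b + G b := by
    intro b hb
    have hb : (0:ℝ) < b := hb
    have h1 : (0:ℝ) ≤ (a ^ 2 + n * b ^ 2) / ((n:ℝ)+1) := by positivity
    have h2 : (0:ℝ) ≤ (a ^ 2 + ((n:ℝ) - 1) * b ^ 2) / n := by positivity
    have hbb : b ^ 2 / (2 * b ^ 2) = 1/2 := by
      rw [mul_comm, ← div_div]
      field_simp
    rw [hF, hℓ, hℓ, hℓ, abs_of_pos hb, Real.sq_sqrt h1, Real.sq_sqrt h2,
      Real.log_sqrt h1, Real.log_sqrt h2, hbb, hG]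
    push_cast
    ring
  have hct : ContinuousAt G 0 := by
    have h1 := stmt14_ct_aux a n ((n:ℝ)+1) ha2 (by positivity)
    have h2 := stmt14_ct_aux a ((n:ℝ)-1) n ha2 hnR
    exact ((((h1.add continuousAt_const).const_mul _).sub
      ((h2.add continuousAt_const).const_mul _)).sub continuousAt_const).sub continuousAt_const
  have hlim : Tendsto G (nhdsWithin 0 (Set.Ioi 0)) (nhds (G 0)) := hct.continuousWithinAt
  have hlog : Tendsto (fun b => -Real.log b) (nhdsWithin 0 (Set.Ioi 0)) atTop := by
    exact tendsto_neg_atTop_iff.mpr Real.tendsto_log_nhdsGT_zero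
  have hT : Tendsto F (nhdsWithin 0 (Set.Ioi 0)) atTop := by
    have hge : ∀ᶠ b in nhdsWithin (0:ℝ) (Set.Ioi 0), G 0 - 1 ≤ G b :=
      hlim.eventually (eventually_ge_nhds (by linarith))
    refine Filter.Tendsto.congr' ?_ (Filter.tendsto_atTop_add_right_of_le' _ (G 0 - 1) hlog hge)
    filter_upwards [self_mem_nhdsWithin] with b hb using (heq b hb).symm
  refine ⟨hT, ?_⟩
  have hev : ∀ᶠ b in nhdsWithin (0:ℝ) (Set.Ioi 0), 0 < F b := hT.eventually_gt_atTop 0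
  obtain ⟨b, hFb, hb⟩ := (hev.and self_mem_nhdsWithin).exists
  exact ⟨b, hb, hFb⟩
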